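/- (Monogamy of pure-state sharing) Let X and Y be nonempty finite types and let φ : X × Y → ℂ be a unit vector. There exists a quantum state ρ on X × Y × X such that the partial trace of ρ over the third factor equals |φ⟩⟨φ| (as a matrix on X × Y) and the partial trace of ρ over the first factor, after the swap reindexing Y × X ≃ X × Y, equals |φ⟩⟨φ|, if and only if φ is a product vector: there exist ψ : X → ℂ and ξ : Y → ℂ with φ (x,y) = ψ x * ξ y for all x, y. -/

import Mathlib

open Matrix Kronecker
open scoped ComplexOrder

noncomputable section

/-- A quantum state: positive semidefinite with unit trace. -/
def IsState {n : Type*} [Fintype n] (ρ : Matrix n n ℂ) : Prop :=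
  ρ.PosSemidef ∧ ρ.trace = 1

/-- The Choi matrix of a linear map on matrices. -/
def choi {n m : Type*} [Fintype n] [DecidableEq n]
    (𝓔 : Matrix n n ℂ →ₗ[ℂ] Matrix m m ℂ) : Matrix (m × n) (m × n) ℂ :=
  Matrix.of fun p q =>
    (1 / (Fintype.card n : ℂ)) * 𝓔 (Matrix.single p.2 q.2 1) p.1 q.1

/-- A quantum channel: trace preserving and completely positive. -/
def IsChannel {n m : Type*} [Fintype n] [DecidableEq n] [Fintype m]
    (𝓔 : Matrix n n ℂ →ₗ[ℂ] Matrix m m ℂ) : Prop :=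
  (∀ ρ : Matrix n n ℂ, (𝓔 ρ).trace = ρ.trace) ∧ (choi 𝓔).PosSemidef

/-- Partial trace over the second (right) factor. -/
def trR {a b : Type*} [Fintype b] (M : Matrix (a × b) (a × b) ℂ) : Matrix a a ℂ :=
  Matrix.of fun i j => ∑ k, M (i, k) (j, k)

/-- Partial trace over the first (left) factor. -/
def trL {a b : Type*} [Fintype a] (M : Matrix (a × b) (a × b) ℂ) : Matrix b b ℂ :=
  Matrix.of fun i j => ∑ k, M (k, i) (k, j)

/-- Partial trace over the third factor of a triple product. -/
def trC3 {a b c : Type*} [Fintype c] (M : Matrix (a × b × c) (a × b × c) ℂ) :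
    Matrix (a × b) (a × b) ℂ :=
  Matrix.of fun i j => ∑ k, M (i.1, i.2, k) (j.1, j.2, k)

/-- Outer product `|v⟩⟨v|` of a vector. -/
def outer {n : Type*} (v : n → ℂ) : Matrix n n ℂ :=
  Matrix.of fun i j => v i * (starRingEnd ℂ) (v j)

lemma outer_posSemidef {n : Type*} [Fintype n] (v : n → ℂ) : (outer v).PosSemidef := by
  refine Matrix.PosSemidef.of_dotProduct_mulVec_nonneg ?_ ?_
  · ext i j
    simp [outer, conjTranspose_apply, mul_comm]
  · intro x
    have h : star x ⬝ᵥ (outer v) *ᵥ x = star (star v ⬝ᵥ x) * (star v ⬝ᵥ x) := by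
      simp only [dotProduct, mulVec, outer, Matrix.of_apply, star_sum, star_mul', star_star,
        Pi.star_apply, Complex.conj_conj, Finset.sum_mul, Finset.mul_sum, RCLike.star_def]
      rw [Finset.sum_comm]
      exact Finset.sum_congr rfl fun i _ => Finset.sum_congr rfl fun j _ => by ring
    rw [h]
    exact star_mul_self_nonneg _

lemma outer_trace {n : Type*} [Fintype n] (v : n → ℂ) :
    (outer v).trace = ((∑ i, ‖v i‖ ^ 2 : ℝ) : ℂ) := by
  push_cast
  simp [Matrix.trace, Matrix.diag, outer, Complex.mul_conj', Complex.mul_conj,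
    Complex.normSq_eq_norm_sq]

open scoped MatrixOrder in
lemma Matrix.posSemidef_iff_eq_transpose_mul_self {n : Type*} [Fintype n] {A : Matrix n n ℂ} :
    A.PosSemidef ↔ ∃ B : Matrix n n ℂ, A = Bᴴ * B := by
  classical
  constructor
  · intro h
    obtain ⟨B, hB⟩ := CStarAlgebra.nonneg_iff_eq_star_mul_self.mp h.nonneg
    exact ⟨B, hB⟩
  · rintro ⟨B, rfl⟩
    exact Matrix.posSemidef_conjTranspose_mul_self B

open scoped MatrixOrder in
def Matrix.PosSemidef.sqrt {n : Type*} [Fintype n] [DecidableEq n] {A : Matrix n n ℂ}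
    (_ : A.PosSemidef) : Matrix n n ℂ :=
  CFC.sqrt A

open scoped MatrixOrder in
lemma Matrix.PosSemidef.posSemidef_sqrt {n : Type*} [Fintype n] [DecidableEq n]
    {A : Matrix n n ℂ} (hA : A.PosSemidef) : hA.sqrt.PosSemidef :=
  (CFC.sqrt_nonneg A).posSemidef

open scoped MatrixOrder in
lemma Matrix.PosSemidef.sqrt_mul_self {n : Type*} [Fintype n] [DecidableEq n]
    {A : Matrix n n ℂ} (hA : A.PosSemidef) : hA.sqrt * hA.sqrt = A :=
  CFC.sqrt_mul_sqrt_self A hA.nonneg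

lemma psd_trace_zero {n : Type*} [Fintype n] {M : Matrix n n ℂ}
    (h : M.PosSemidef) (ht : M.trace = 0) : M = 0 := by
  obtain ⟨B, rfl⟩ := (Matrix.posSemidef_iff_eq_transpose_mul_self).mp h
  rw [Matrix.conjTranspose_mul_self_eq_zero.mpr ?_]
  have key : ∑ j, ∑ i, Complex.normSq (B i j) = 0 := by
    have := congrArg Complex.re ht
    simpa [Matrix.trace, Matrix.diag, Matrix.mul_apply, Matrix.conjTranspose_apply,
      ← Complex.normSq_eq_conj_mul_self] using this
  ext i j
  have h1 : ∀ j ∈ (Finset.univ : Finset n), (0:ℝ) ≤ ∑ i, Complex.normSq (B i j) :=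
    fun j _ => Finset.sum_nonneg fun i _ => Complex.normSq_nonneg _
  have := (Finset.sum_eq_zero_iff_of_nonneg h1).mp key j (Finset.mem_univ j)
  have := (Finset.sum_eq_zero_iff_of_nonneg (fun i _ => Complex.normSq_nonneg (B i j))).mp this i
    (Finset.mem_univ i)
  simpa [Complex.normSq_eq_zero] using this


/-- Monogamy of pure-state sharing: a pure state `|φ⟩⟨φ|` on `X × Y` can be shared
symmetrically by two parties (as the `XY` and `YX` marginals of a tripartite state on
`X × Y × X`) iff `φ` is a product vector. -/
theorem pure_state_sharing_iff_product
    {X Y : Type*} [Fintype X] [DecidableEq X] [Nonempty X]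
    [Fintype Y] [DecidableEq Y] [Nonempty Y]
    (φ : X × Y → ℂ) (hunit : ∑ p, ‖φ p‖ ^ 2 = 1) :
    (∃ ρ : Matrix (X × Y × X) (X × Y × X) ℂ, IsState ρ ∧
        trC3 ρ = outer φ ∧
        (trL ρ).submatrix Prod.swap Prod.swap = outer φ) ↔
      ∃ (ψ : X → ℂ) (ξ : Y → ℂ), ∀ (x : X) (y : Y), φ (x, y) = ψ x * ξ y := by
  constructor
  · intro h
    obtain ⟨ρ, ⟨hPSD, htr⟩, h1, h2⟩ := h
    have hφ1 : ∑ p : X × Y, φ p * (starRingEnd ℂ) (φ p) = 1 := by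
      have : ∑ p, φ p * (starRingEnd ℂ) (φ p) = ((∑ p, ‖φ p‖ ^ 2 : ℝ) : ℂ) := by
        push_cast
        simp [Complex.mul_conj, Complex.normSq_eq_norm_sq]
      rw [this, hunit]
      norm_num
    set P : Matrix (X × Y × X) (X × Y × X) ℂ :=
      Matrix.of (fun i j => φ (i.1, i.2.1) * (starRingEnd ℂ) (φ (j.1, j.2.1)) *
        (if i.2.2 = j.2.2 then 1 else 0)) with hP
    have hPH : Pᴴ = P := by
      ext i j
      by_cases hij : i.2.2 = j.2.2
      · simp [hP, conjTranspose_apply, hij, mul_comm]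
      · simp [hP, conjTranspose_apply, hij, Ne.symm hij]
    have hPP : P * P = P := by
      ext i j
      rw [Matrix.mul_apply]
      have key : ∀ a : X × Y × X, P i a * P a j
          = P i j * (φ (a.1, a.2.1) * (starRingEnd ℂ) (φ (a.1, a.2.1)) *
              (if a.2.2 = i.2.2 then 1 else 0)) := by
        intro a
        simp only [hP, Matrix.of_apply]
        by_cases h4 : a.2.2 = i.2.2
        · rw [if_pos h4, if_pos h4.symm, h4]
          ring
        · rw [if_neg h4, if_neg (Ne.symm h4)]
          ring
      rw [Finset.sum_congr rfl (fun a _ => key a), ← Finset.mul_sum]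
      have hsum : (∑ a : X × Y × X, (φ (a.1, a.2.1) * (starRingEnd ℂ) (φ (a.1, a.2.1)) *
          (if a.2.2 = i.2.2 then 1 else 0))) = 1 := by
        simp only [Fintype.sum_prod_type]
        simp only [mul_ite, mul_one, mul_zero, Finset.sum_ite_eq', Finset.mem_univ, if_true]
        have h' := hφ1
        rw [Fintype.sum_prod_type] at h'
        exact h'
      rw [hsum, mul_one]
    have htrP : (ρ * P).trace = 1 := by
      have expand : (ρ * P).trace
          = ∑ p : X × Y, ∑ q : X × Y, (trC3 ρ) p q * (φ q * (starRingEnd ℂ) (φ p)) := by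
        simp only [Matrix.trace, Matrix.diag, Matrix.mul_apply, hP, Matrix.of_apply,
          trC3, Fintype.sum_prod_type]
        simp only [mul_ite, mul_one, mul_zero, Finset.sum_ite_eq', Finset.mem_univ, if_true,
          Finset.sum_mul]
        refine Finset.sum_congr rfl fun x _ => Finset.sum_congr rfl fun y _ => ?_
        rw [Finset.sum_comm]
        exact Finset.sum_congr rfl fun x' _ => Finset.sum_comm
      rw [expand, h1]
      simp only [outer, Matrix.of_apply]
      have : ∀ p : X × Y, ∑ q : X × Y, φ p * (starRingEnd ℂ) (φ q) * (φ q * (starRingEnd ℂ) (φ p))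
          = (φ p * (starRingEnd ℂ) (φ p)) * ∑ q, φ q * (starRingEnd ℂ) (φ q) := by
        intro p
        rw [Finset.mul_sum]
        exact Finset.sum_congr rfl fun q _ => by ring
      simp_rw [this, hφ1, mul_one, hφ1]
    set Q : Matrix (X × Y × X) (X × Y × X) ℂ := 1 - P with hQ
    have hQH : Qᴴ = Q := by
      rw [hQ, conjTranspose_sub, conjTranspose_one, hPH]
    have hQQ : Q * Q = Q := by
      rw [hQ]
      calc (1 - P) * (1 - P) = 1 - P - P + P * P := by noncomm_ring
      _ = 1 - P := by rw [hPP]; abel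
    have hQρQ : Q * ρ * Q = 0 := by
      have hpsd2 : (Q * ρ * Q).PosSemidef := by
        nth_rewrite 1 [← hQH]
        exact hPSD.conjTranspose_mul_mul_same Q
      refine psd_trace_zero hpsd2 ?_
      rw [Matrix.trace_mul_cycle, hQQ, hQ, Matrix.sub_mul, Matrix.one_mul,
        trace_sub, htr, Matrix.trace_mul_comm, htrP, sub_self]
    have hSQ : hPSD.sqrt * Q = 0 := by
      have h0 : (hPSD.sqrt * Q)ᴴ * (hPSD.sqrt * Q) = 0 := by
        rw [conjTranspose_mul, hQH, hPSD.posSemidef_sqrt.1]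
        calc Q * hPSD.sqrt * (hPSD.sqrt * Q) = Q * (hPSD.sqrt * hPSD.sqrt) * Q := by
              simp only [Matrix.mul_assoc]
        _ = 0 := by rw [hPSD.sqrt_mul_self]; exact hQρQ
      exact Matrix.conjTranspose_mul_self_eq_zero.mp h0
    have hρQ : ρ * Q = 0 := by
      calc ρ * Q = hPSD.sqrt * (hPSD.sqrt * Q) := by
            rw [← Matrix.mul_assoc, hPSD.sqrt_mul_self]
      _ = 0 := by rw [hSQ, Matrix.mul_zero]
    have hρP : ρ * P = ρ := by
      rw [hQ, Matrix.mul_sub, Matrix.mul_one] at hρQ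
      exact (sub_eq_zero.mp hρQ).symm
    have hPρ : P * ρ = ρ := by
      have h0 : (ρ * Q)ᴴ = 0 := by rw [hρQ, conjTranspose_zero]
      rw [conjTranspose_mul, hQH, hPSD.1] at h0
      rw [hQ, Matrix.sub_mul, Matrix.one_mul] at h0
      exact (sub_eq_zero.mp h0).symm
    have hfact : P * ρ * P = ρ := by rw [Matrix.mul_assoc, hρP, hPρ]
    set σ : X → X → ℂ := fun k l => ∑ b1, ∑ b2, ∑ p1, ∑ p2,
      (starRingEnd ℂ) (φ (p1, p2)) * ρ (p1, p2, k) (b1, b2, l) * φ (b1, b2) with hσ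
    have hentry : ∀ (x : X) (y : Y) (k x' : X) (y' : Y) (l : X),
        ρ (x, y, k) (x', y', l)
          = φ (x, y) * (starRingEnd ℂ) (φ (x', y')) * σ k l := by
      intro x y k x' y' l
      conv_lhs => rw [← hfact]
      simp only [Matrix.mul_apply, hP, Matrix.of_apply, Fintype.sum_prod_type, hσ]
      simp only [mul_ite, mul_one, mul_zero, ite_mul, zero_mul, one_mul,
        Finset.sum_ite_eq, Finset.sum_ite_eq', Finset.mem_univ, if_true]
      simp only [Finset.mul_sum, Finset.sum_mul]
      exact Finset.sum_congr rfl fun b1 _ => Finset.sum_congr rfl fun b2 _ =>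
        Finset.sum_congr rfl fun p1 _ => Finset.sum_congr rfl fun p2 _ => by ring
    have h2' : ∀ (x : X) (y : Y) (x' : X) (y' : Y),
        ∑ k, ρ (k, y, x) (k, y', x') = φ (x, y) * (starRingEnd ℂ) (φ (x', y')) := by
      intro x y x' y'
      have := congrArg (fun M => M (x, y) (x', y')) h2
      simpa [trL, outer, Matrix.submatrix_apply] using this
    have hex : ∃ p : X × Y, φ p ≠ 0 := by
      by_contra hc
      push_neg at hc
      simp [hc] at hunit
    obtain ⟨p₀, hp₀⟩ := hex
    refine ⟨fun x => σ x p₀.1 / (starRingEnd ℂ) (φ p₀),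
      fun y => ∑ k, φ (k, y) * (starRingEnd ℂ) (φ (k, p₀.2)), ?_⟩
    intro x y
    have key := h2' x y p₀.1 p₀.2
    rw [Finset.sum_congr rfl (fun k _ => hentry k y x k p₀.2 p₀.1)] at key
    rw [← Finset.sum_mul] at key
    have hc0 : (starRingEnd ℂ) (φ p₀) ≠ 0 := by
      simpa using hp₀
    rw [Prod.mk.eta] at key
    field_simp
    linear_combination -key
  · intro h
    obtain ⟨ψ, ξ, hp⟩ := h
    have hex : ∃ p : X × Y, φ p ≠ 0 := by
      by_contra hc
      push_neg at hc
      simp [hc] at hunit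
    obtain ⟨p₀, hp₀⟩ := hex
    set c : ℝ := ∑ x, ‖ψ x‖ ^ 2 with hc_def
    have hψ0 : ψ p₀.1 ≠ 0 := by
      intro h0
      apply hp₀
      rw [show p₀ = (p₀.1, p₀.2) by rfl, hp, h0, zero_mul]
    have hc : 0 < c := by
      refine Finset.sum_pos' (fun i _ => by positivity)
        ⟨p₀.1, Finset.mem_univ _, pow_pos (norm_pos_iff.mpr hψ0) 2⟩
    set Φ : X × Y × X → ℂ := fun t => φ (t.1, t.2.1) * ψ t.2.2 / (Real.sqrt c : ℂ) with hΦ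
    have hs0 : ((Real.sqrt c : ℝ) : ℂ) ≠ 0 := by
      exact_mod_cast (Real.sqrt_pos.mpr hc).ne'
    have hsc : ((Real.sqrt c : ℂ)) * ((Real.sqrt c : ℂ)) = (c : ℂ) := by
      rw [← Complex.ofReal_mul, Real.mul_self_sqrt hc.le]
    have hpsi : ∑ k, ψ k * (starRingEnd ℂ) (ψ k) = (c : ℂ) := by
      push_cast [hc_def]
      simp [Complex.mul_conj, Complex.normSq_eq_norm_sq]
    have hc0 : (c : ℂ) ≠ 0 := by exact_mod_cast hc.ne'
    refine ⟨outer Φ, ⟨outer_posSemidef Φ, ?_⟩, ?_, ?_⟩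
    · rw [outer_trace]
      norm_cast
      have hterm : ∀ t : X × Y × X, ‖Φ t‖ ^ 2 = ‖φ (t.1, t.2.1)‖ ^ 2 * ‖ψ t.2.2‖ ^ 2 / c := by
        intro t
        rw [hΦ]
        simp only [norm_div, norm_mul, mul_pow, div_pow, Complex.norm_real,
          Real.norm_eq_abs, abs_of_nonneg (Real.sqrt_nonneg c), Real.sq_sqrt hc.le]
      have inner : ∀ a : ℝ, ∑ k, a * ‖ψ k‖ ^ 2 / c = a := by
        intro a
        rw [← Finset.sum_div, ← Finset.mul_sum, ← hc_def, mul_div_assoc, div_self hc.ne', mul_one]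
      simp_rw [hterm]
      rw [Fintype.sum_prod_type] at hunit ⊢
      simp_rw [Fintype.sum_prod_type, inner]
      exact hunit
    · ext i j
      show ∑ k, Φ (i.1, i.2, k) * (starRingEnd ℂ) (Φ (j.1, j.2, k)) = φ i * (starRingEnd ℂ) (φ j)
      have step : ∀ k, Φ (i.1, i.2, k) * (starRingEnd ℂ) (Φ (j.1, j.2, k))
          = (φ i * (starRingEnd ℂ) (φ j)) * (ψ k * (starRingEnd ℂ) (ψ k)) / (c : ℂ) := by
        intro k
        rw [hΦ]
        simp only [map_div₀, _root_.map_mul, Complex.conj_ofReal]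
        rw [← hsc]
        field_simp
      simp_rw [step]
      rw [← Finset.sum_div, ← Finset.mul_sum, hpsi, mul_div_assoc, div_self hc0, mul_one]
    · ext i j
      show (trL (outer Φ)) (i.2, i.1) (j.2, j.1) = φ i * (starRingEnd ℂ) (φ j)
      show ∑ k, Φ (k, i.2, i.1) * (starRingEnd ℂ) (Φ (k, j.2, j.1)) = φ i * (starRingEnd ℂ) (φ j)
      have step : ∀ k, Φ (k, i.2, i.1) * (starRingEnd ℂ) (Φ (k, j.2, j.1))
          = (φ i * (starRingEnd ℂ) (φ j)) * (ψ k * (starRingEnd ℂ) (ψ k)) / (c : ℂ) := by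
        intro k
        rw [hΦ]
        simp only
        rw [hp k i.2, hp k j.2, show φ i = φ (i.1, i.2) by rw [Prod.mk.eta],
          show φ j = φ (j.1, j.2) by rw [Prod.mk.eta], hp i.1 i.2, hp j.1 j.2]
        simp only [map_div₀, _root_.map_mul, Complex.conj_ofReal]
        rw [← hsc]
        field_simp
      simp_rw [step]
      rw [← Finset.sum_div, ← Finset.mul_sum, hpsi, mul_div_assoc, div_self hc0, mul_one]
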